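/- (Inequality (2.7), algebraic form.) Let α > 0. Suppose Q̊(ψ) ≥ α ‖ψ‖² for every traceless symmetric bilinear form ψ on E, and Ric(X,X) ≥ (n−1) α ‖X‖² for every X ∈ E. Then for every p ≥ 2 and every totally traceless symmetric p-multilinear map φ : E^p → ℝ, the Weitzenböck quadratic form satisfies Q_p(φ) ≥ p(n+p−2) α ‖φ‖² ≥ 0, and Q_p(φ) = 0 only if φ = 0. -/

import Mathlib

open scoped RealInnerProductSpace

private lemma aux_sum_cons_split {q n : ℕ} (f : (Fin (q + 1) → Fin n) → ℝ) :
    ∑ t : Fin (q + 1) → Fin n, f t = ∑ i, ∑ ks : Fin q → Fin n, f (Fin.cons i ks) := by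
  rw [← Equiv.sum_comp (Fin.consEquiv fun _ => Fin n) f, Fintype.sum_prod_type]
  rfl

private lemma aux_swap3 {β γ δ : Type*} [Fintype β] [Fintype γ] [Fintype δ]
    (H : β → γ → δ → ℝ) :
    (∑ i, ∑ j, ∑ k, H i j k) = ∑ k, ∑ i, ∑ j, H i j k := by
  rw [show (∑ i, ∑ j, ∑ k, H i j k) = ∑ i, ∑ k, ∑ j, H i j k from
    Finset.sum_congr rfl fun i _ => Finset.sum_comm, Finset.sum_comm]

private lemma aux_sum4_reorder {n : ℕ} (F : Fin n → Fin n → Fin n → Fin n → ℝ) :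
    (∑ i, ∑ j, ∑ k, ∑ l, F i j k l) = ∑ a, ∑ b, ∑ c, ∑ d, F c a d b := by
  calc (∑ i, ∑ j, ∑ k, ∑ l, F i j k l)
      = ∑ j, ∑ i, ∑ k, ∑ l, F i j k l := Finset.sum_comm
    _ = ∑ j, ∑ i, ∑ l, ∑ k, F i j k l := by
        refine Finset.sum_congr rfl fun j _ => Finset.sum_congr rfl fun i _ => ?_
        exact Finset.sum_comm
    _ = ∑ j, ∑ l, ∑ i, ∑ k, F i j k l := by
        refine Finset.sum_congr rfl fun j _ => ?_
        exact Finset.sum_comm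


/-- The Weitzenböck quadratic form `Q_p` on symmetric `p`-multilinear maps (with
`p = p' + 2 ≥ 2`):
`Q_p(φ) = p Σ Ric(e_i,e_j) φ(e_i,e_{k₂},…) φ(e_j,e_{k₂},…)
  − p(p−1) Σ R(e_i,e_j,e_k,e_l) φ(e_i,e_k,e_{k₃},…) φ(e_j,e_l,e_{k₃},…)`,
where `Ric(X,Y) = Σ_m R(e_m,X,e_m,Y)`. -/
noncomputable def weitzenbockQ
    {E : Type*} [NormedAddCommGroup E] [InnerProductSpace ℝ E]
    {n : ℕ} (e : OrthonormalBasis (Fin n) ℝ E)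
    (R : E →ₗ[ℝ] E →ₗ[ℝ] E →ₗ[ℝ] E →ₗ[ℝ] ℝ)
    (p : ℕ) (φ : MultilinearMap ℝ (fun _ : Fin (p + 2) => E) ℝ) : ℝ :=
  ((p : ℝ) + 2) *
      (∑ i, ∑ j, ∑ ks : Fin (p + 1) → Fin n,
        (∑ m, R (e m) (e i) (e m) (e j)) *
          φ (Fin.cons (e i) (fun m => e (ks m))) *
          φ (Fin.cons (e j) (fun m => e (ks m))))
    - ((p : ℝ) + 2) * (((p : ℝ) + 2) - 1) *
      (∑ i, ∑ j, ∑ k, ∑ l, ∑ ks : Fin p → Fin n,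
        R (e i) (e j) (e k) (e l) *
          φ (Fin.cons (e i) (Fin.cons (e k) (fun m => e (ks m)))) *
          φ (Fin.cons (e j) (Fin.cons (e l) (fun m => e (ks m)))))

/-- **inequality (2.7), algebraic form.** Let `α > 0`.  If
`Q̊(ψ) ≥ α ‖ψ‖²` for every traceless symmetric bilinear form `ψ` and
`Ric(X,X) ≥ (n−1) α ‖X‖²` for every `X`, then for every `p ≥ 2` (written `p + 2`)
and every totally traceless symmetric `p`-multilinear map `φ`,
`Q_p(φ) ≥ p(n+p−2) α ‖φ‖² ≥ 0`, and `Q_p(φ) = 0` only if `φ = 0`. -/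
theorem stmt_12
    {E : Type*} [NormedAddCommGroup E] [InnerProductSpace ℝ E]
    {n : ℕ} (hn : 2 ≤ n) (e : OrthonormalBasis (Fin n) ℝ E)
    (R : E →ₗ[ℝ] E →ₗ[ℝ] E →ₗ[ℝ] E →ₗ[ℝ] ℝ)
    (hR1 : ∀ X Y Z W : E, R X Y Z W = - R Y X Z W)
    (hR2 : ∀ X Y Z W : E, R X Y Z W = - R X Y W Z)
    (hR3 : ∀ X Y Z W : E, R X Y Z W = R Z W X Y)
    (hR4 : ∀ X Y Z W : E, R X Y Z W + R Y Z X W + R Z X Y W = 0)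
    (α : ℝ) (hα : 0 < α)
    (hQ : ∀ ψ : E →ₗ[ℝ] E →ₗ[ℝ] ℝ, (∀ X Y : E, ψ X Y = ψ Y X) →
      (∑ i, ψ (e i) (e i)) = 0 →
      α * (∑ i, ∑ j, (ψ (e i) (e j)) ^ 2) ≤
        ∑ i, ∑ j, ∑ k, ∑ l, R (e i) (e k) (e l) (e j) * ψ (e k) (e l) * ψ (e i) (e j))
    (hRic : ∀ X : E, ((n : ℝ) - 1) * α * ‖X‖ ^ 2 ≤ ∑ m, R (e m) X (e m) X)
    (p : ℕ)
    (φ : MultilinearMap ℝ (fun _ : Fin (p + 2) => E) ℝ)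
    (hφsymm : ∀ σ : Equiv.Perm (Fin (p + 2)), ∀ v : Fin (p + 2) → E, φ (v ∘ σ) = φ v)
    (hφtr : ∀ v : Fin p → E, (∑ i, φ (Fin.cons (e i) (Fin.cons (e i) v))) = 0) :
    0 ≤ ((p : ℝ) + 2) * ((n : ℝ) + ((p : ℝ) + 2) - 2) * α *
        (∑ t : Fin (p + 2) → Fin n, (φ (fun m => e (t m))) ^ 2) ∧
    ((p : ℝ) + 2) * ((n : ℝ) + ((p : ℝ) + 2) - 2) * α *
        (∑ t : Fin (p + 2) → Fin n, (φ (fun m => e (t m))) ^ 2) ≤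
      weitzenbockQ e R p φ ∧
    (weitzenbockQ e R p φ = 0 → φ = 0) := by
  classical
  have h2n : (2 : ℝ) ≤ (n : ℝ) := by exact_mod_cast hn
  have hp0 : (0 : ℝ) ≤ (p : ℝ) := Nat.cast_nonneg p
  -- composing the basis with `Fin.cons`
  have hcons : ∀ {q : ℕ} (t : Fin q → Fin n) (i : Fin n),
      (fun m : Fin (q + 1) => e ((Fin.cons i t : Fin (q + 1) → Fin n) m))
        = Fin.cons (e i) (fun m => e (t m)) := by
    intro q t i
    funext m
    induction m using Fin.cases <;> simp
  -- symmetry in the first two slots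
  have hswap : ∀ (X Y : E) (v : Fin p → E),
      φ (Fin.cons X (Fin.cons Y v)) = φ (Fin.cons Y (Fin.cons X v)) := by
    intro X Y v
    have h := hφsymm (Equiv.swap 0 1) (Fin.cons Y (Fin.cons X v))
    have hfun : (Fin.cons Y (Fin.cons X v)) ∘ (Equiv.swap (0 : Fin (p + 2)) 1)
        = Fin.cons X (Fin.cons Y v) := by
      funext i
      refine Fin.cases ?_ (fun j => ?_) i
      · simp only [Function.comp_apply, Equiv.swap_apply_left, Fin.cons_zero]
        rw [show (1 : Fin (p + 2)) = Fin.succ 0 from rfl, Fin.cons_succ, Fin.cons_zero]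
      · refine Fin.cases ?_ (fun k => ?_) j
        · simp only [Function.comp_apply, Fin.cons_succ, Fin.cons_zero]
          rw [show Fin.succ (0 : Fin (p + 1)) = 1 from rfl, Equiv.swap_apply_right,
            Fin.cons_zero]
        · have hne0 : (Fin.succ (Fin.succ k)) ≠ 0 := Fin.succ_ne_zero _
          have hne1 : (Fin.succ (Fin.succ k)) ≠ 1 := by
            rw [← Fin.succ_zero_eq_one]
            exact fun h' => Fin.succ_ne_zero k (Fin.succ_injective _ h')
          simp only [Function.comp_apply, Equiv.swap_apply_of_ne_of_ne hne0 hne1, Fin.cons_succ]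
    rw [hfun] at h
    exact h
  -- linearity in the second slot
  have key_add2 : ∀ (X Y Z : E) (v : Fin p → E),
      φ (Fin.cons X (Fin.cons (Y + Z) v))
        = φ (Fin.cons X (Fin.cons Y v)) + φ (Fin.cons X (Fin.cons Z v)) := by
    intro X Y Z v
    simpa using (φ.curryLeft X).cons_add v Y Z
  have key_smul2 : ∀ (c : ℝ) (X Y : E) (v : Fin p → E),
      φ (Fin.cons X (Fin.cons (c • Y) v)) = c • φ (Fin.cons X (Fin.cons Y v)) := by
    intro c X Y v
    simpa using (φ.curryLeft X).cons_smul v c Y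
  -- the bilinear forms ψ ks
  let ψ : (Fin p → Fin n) → E →ₗ[ℝ] E →ₗ[ℝ] ℝ := fun ks => LinearMap.mk₂ ℝ
    (fun X Y => φ (Fin.cons X (Fin.cons Y (fun m => e (ks m)))))
    (fun X X' Y => φ.cons_add _ X X')
    (fun c X Y => φ.cons_smul _ c X)
    (fun X Y Y' => key_add2 X Y Y' _)
    (fun c X Y => key_smul2 c X Y _)
  have hψapp : ∀ (ks : Fin p → Fin n) (X Y : E),
      ψ ks X Y = φ (Fin.cons X (Fin.cons Y (fun m => e (ks m)))) := fun ks X Y => rfl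
  have hψsymm : ∀ ks, ∀ X Y : E, ψ ks X Y = ψ ks Y X := fun ks X Y => hswap X Y _
  have hψtr : ∀ ks, (∑ i, ψ ks (e i) (e i)) = 0 := fun ks => hφtr _
  -- per-ks curvature bound
  have hcurv : ∀ ks : Fin p → Fin n,
      (∑ i, ∑ j, ∑ k, ∑ l, R (e i) (e j) (e k) (e l) *
          φ (Fin.cons (e i) (Fin.cons (e k) (fun m => e (ks m)))) *
          φ (Fin.cons (e j) (Fin.cons (e l) (fun m => e (ks m)))))
        ≤ -(α * ∑ i, ∑ j, (ψ ks (e i) (e j)) ^ 2) := by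
    intro ks
    have h := hQ (ψ ks) (hψsymm ks) (hψtr ks)
    calc (∑ i, ∑ j, ∑ k, ∑ l, R (e i) (e j) (e k) (e l) *
          φ (Fin.cons (e i) (Fin.cons (e k) (fun m => e (ks m)))) *
          φ (Fin.cons (e j) (Fin.cons (e l) (fun m => e (ks m)))))
        = ∑ i, ∑ j, ∑ k, ∑ l, R (e i) (e j) (e k) (e l) *
            ψ ks (e i) (e k) * ψ ks (e j) (e l) := rfl
      _ = ∑ a, ∑ b, ∑ c, ∑ d, R (e c) (e a) (e d) (e b) *
            ψ ks (e c) (e d) * ψ ks (e a) (e b) :=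
          aux_sum4_reorder (fun i j k l =>
            R (e i) (e j) (e k) (e l) * ψ ks (e i) (e k) * ψ ks (e j) (e l))
      _ = -(∑ i, ∑ j, ∑ k, ∑ l, R (e i) (e k) (e l) (e j) *
            ψ ks (e k) (e l) * ψ ks (e i) (e j)) := by
          simp only [← Finset.sum_neg_distrib]
          refine Finset.sum_congr rfl fun a _ => Finset.sum_congr rfl fun b _ =>
            Finset.sum_congr rfl fun c _ => Finset.sum_congr rfl fun d _ => ?_
          rw [hR1 (e c) (e a) (e d) (e b)]
          ring
      _ ≤ -(α * ∑ i, ∑ j, (ψ ks (e i) (e j)) ^ 2) := neg_le_neg h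
  -- per-tuple Ricci bound
  have hric : ∀ t : Fin (p + 1) → Fin n,
      ((n : ℝ) - 1) * α * (∑ i, (φ (Fin.cons (e i) (fun m => e (t m)))) ^ 2)
        ≤ ∑ i, ∑ j, (∑ m, R (e m) (e i) (e m) (e j)) *
            φ (Fin.cons (e i) (fun m => e (t m))) *
            φ (Fin.cons (e j) (fun m => e (t m))) := by
    intro t
    set c : Fin n → ℝ := fun i => φ (Fin.cons (e i) (fun m => e (t m))) with hc
    have hX : ‖∑ i, c i • e i‖ ^ 2 = ∑ i, (c i) ^ 2 := by
      rw [← real_inner_self_eq_norm_sq]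
      simpa [sq] using e.orthonormal.inner_sum c c Finset.univ
    have h2 : (∑ m, R (e m) (∑ i, c i • e i) (e m) (∑ i, c i • e i))
        = ∑ i, ∑ j, (∑ m, R (e m) (e i) (e m) (e j)) * c i * c j := by
      simp only [map_sum, map_smul, LinearMap.sum_apply, LinearMap.smul_apply, smul_eq_mul,
        Finset.mul_sum]
      rw [Finset.sum_comm]
      refine (Finset.sum_congr rfl fun a _ => Finset.sum_comm).trans ?_
      rw [Finset.sum_comm]
      refine Finset.sum_congr rfl fun i _ => Finset.sum_congr rfl fun j _ => ?_
      rw [Finset.sum_mul, Finset.sum_mul]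
      exact Finset.sum_congr rfl fun m _ => by ring
    have h3 := hRic (∑ i, c i • e i)
    rw [hX, h2] at h3
    exact h3
  -- the squared norm of φ
  set N := ∑ t : Fin (p + 2) → Fin n, (φ (fun m => e (t m))) ^ 2 with hNdef
  have hNnn : 0 ≤ N := hNdef ▸ Finset.sum_nonneg fun _ _ => sq_nonneg _
  have hsplit1 : N = ∑ t : Fin (p + 1) → Fin n, ∑ i,
      (φ (Fin.cons (e i) (fun m => e (t m)))) ^ 2 := by
    rw [hNdef, aux_sum_cons_split (fun t => (φ (fun m => e (t m))) ^ 2), Finset.sum_comm]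
    refine Finset.sum_congr rfl fun t _ => Finset.sum_congr rfl fun i _ => ?_
    rw [hcons]
  have hsplit2 : N = ∑ ks : Fin p → Fin n, ∑ i, ∑ j, (ψ ks (e i) (e j)) ^ 2 := by
    have h1 : N = ∑ i, ∑ j, ∑ ks : Fin p → Fin n,
        (φ (Fin.cons (e i) (Fin.cons (e j) (fun m => e (ks m))))) ^ 2 := by
      rw [hNdef, aux_sum_cons_split (fun t => (φ (fun m => e (t m))) ^ 2)]
      refine Finset.sum_congr rfl fun i _ => ?_
      rw [aux_sum_cons_split (n := n) (q := p)
        (fun ks : Fin (p + 1) → Fin n =>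
          (φ (fun m : Fin (p + 2) => e ((Fin.cons i ks : Fin (p + 2) → Fin n) m))) ^ 2)]
      refine Finset.sum_congr rfl fun j _ => Finset.sum_congr rfl fun ks _ => ?_
      rw [hcons (Fin.cons j ks) i, hcons ks j]
    rw [h1]
    exact aux_swap3 (fun i j (ks : Fin p → Fin n) =>
      (φ (Fin.cons (e i) (Fin.cons (e j) (fun m => e (ks m))))) ^ 2)
  -- name the two big sums in weitzenbockQ
  set A := (∑ i, ∑ j, ∑ ks : Fin (p + 1) → Fin n,
      (∑ m, R (e m) (e i) (e m) (e j)) *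
        φ (Fin.cons (e i) (fun m => e (ks m))) *
        φ (Fin.cons (e j) (fun m => e (ks m)))) with hAdef
  set B := (∑ i, ∑ j, ∑ k, ∑ l, ∑ ks : Fin p → Fin n,
      R (e i) (e j) (e k) (e l) *
        φ (Fin.cons (e i) (Fin.cons (e k) (fun m => e (ks m)))) *
        φ (Fin.cons (e j) (Fin.cons (e l) (fun m => e (ks m))))) with hBdef
  have hW : weitzenbockQ e R p φ
      = ((p : ℝ) + 2) * A - ((p : ℝ) + 2) * (((p : ℝ) + 2) - 1) * B := by
    rw [hAdef, hBdef]; rfl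
  -- bound A from below
  have hA : ((n : ℝ) - 1) * α * N ≤ A := by
    rw [hAdef, aux_swap3 (fun i j (ks : Fin (p + 1) → Fin n) =>
      (∑ m, R (e m) (e i) (e m) (e j)) *
        φ (Fin.cons (e i) (fun m => e (ks m))) *
        φ (Fin.cons (e j) (fun m => e (ks m)))), hsplit1, Finset.mul_sum]
    exact Finset.sum_le_sum fun t _ => hric t
  -- bound B from above
  have hB : B ≤ -(α * N) := by
    rw [hBdef]
    have hswapB : (∑ i, ∑ j, ∑ k, ∑ l, ∑ ks : Fin p → Fin n,
        R (e i) (e j) (e k) (e l) *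
          φ (Fin.cons (e i) (Fin.cons (e k) (fun m => e (ks m)))) *
          φ (Fin.cons (e j) (Fin.cons (e l) (fun m => e (ks m)))))
        = ∑ ks : Fin p → Fin n, ∑ i, ∑ j, ∑ k, ∑ l,
          R (e i) (e j) (e k) (e l) *
            φ (Fin.cons (e i) (Fin.cons (e k) (fun m => e (ks m)))) *
            φ (Fin.cons (e j) (Fin.cons (e l) (fun m => e (ks m)))) := by
      refine (Finset.sum_congr rfl fun i _ => Finset.sum_congr rfl fun j _ =>
        aux_swap3 _).trans (aux_swap3 _)
    rw [hswapB]
    calc (∑ ks : Fin p → Fin n, ∑ i, ∑ j, ∑ k, ∑ l,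
          R (e i) (e j) (e k) (e l) *
            φ (Fin.cons (e i) (Fin.cons (e k) (fun m => e (ks m)))) *
            φ (Fin.cons (e j) (Fin.cons (e l) (fun m => e (ks m)))))
        ≤ ∑ ks : Fin p → Fin n, -(α * ∑ i, ∑ j, (ψ ks (e i) (e j)) ^ 2) :=
          Finset.sum_le_sum fun ks _ => hcurv ks
      _ = -(α * ∑ ks : Fin p → Fin n, ∑ i, ∑ j, (ψ ks (e i) (e j)) ^ 2) := by
          rw [Finset.sum_neg_distrib, Finset.mul_sum]
      _ = -(α * N) := by rw [← hsplit2]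
  -- main inequality
  have hmain : ((p : ℝ) + 2) * ((n : ℝ) + ((p : ℝ) + 2) - 2) * α * N
      ≤ weitzenbockQ e R p φ := by
    have h1 : ((p : ℝ) + 2) * (((n : ℝ) - 1) * α * N) ≤ ((p : ℝ) + 2) * A :=
      mul_le_mul_of_nonneg_left hA (by positivity)
    have hcc : (0 : ℝ) ≤ ((p : ℝ) + 2) * (((p : ℝ) + 2) - 1) :=
      mul_nonneg (by linarith) (by linarith)
    have h2 : ((p : ℝ) + 2) * (((p : ℝ) + 2) - 1) * B
        ≤ ((p : ℝ) + 2) * (((p : ℝ) + 2) - 1) * (-(α * N)) :=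
      mul_le_mul_of_nonneg_left hB hcc
    rw [hW]
    have key : ((p : ℝ) + 2) * ((n : ℝ) + ((p : ℝ) + 2) - 2) * α * N
        = ((p : ℝ) + 2) * (((n : ℝ) - 1) * α * N)
          + ((p : ℝ) + 2) * (((p : ℝ) + 2) - 1) * (α * N) := by ring
    rw [key]
    linarith [h1, h2]
  have hcoef : (0 : ℝ) ≤ ((p : ℝ) + 2) * ((n : ℝ) + ((p : ℝ) + 2) - 2) * α := by
    have : (0 : ℝ) ≤ (n : ℝ) + ((p : ℝ) + 2) - 2 := by linarith
    positivity
  refine ⟨mul_nonneg hcoef hNnn, hmain, ?_⟩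
  intro h0
  have hcpos : (0 : ℝ) < ((p : ℝ) + 2) * ((n : ℝ) + ((p : ℝ) + 2) - 2) * α := by
    have h1 : (0 : ℝ) < (p : ℝ) + 2 := by linarith
    have h2 : (0 : ℝ) < (n : ℝ) + ((p : ℝ) + 2) - 2 := by linarith
    positivity
  have hN0 : N = 0 := by
    rw [h0] at hmain
    have hprod0 : ((p : ℝ) + 2) * ((n : ℝ) + ((p : ℝ) + 2) - 2) * α * N = 0 :=
      le_antisymm hmain (mul_nonneg hcoef hNnn)
    exact (mul_eq_zero.mp hprod0).resolve_left (ne_of_gt hcpos)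
  have hsum0 : (∑ t : Fin (p + 2) → Fin n, (φ (fun m => e (t m))) ^ 2) = 0 := by
    rw [← hNdef]; exact hN0
  have hall : ∀ t : Fin (p + 2) → Fin n, φ (fun m => e (t m)) = 0 := by
    intro t
    have h := (Finset.sum_eq_zero_iff_of_nonneg
      (fun (x : Fin (p + 2) → Fin n) _ => sq_nonneg (φ (fun m => e (x m))))).mp
      hsum0 t (Finset.mem_univ t)
    exact pow_eq_zero_iff two_ne_zero |>.mp h
  refine Module.Basis.ext_multilinear (fun _ => e.toBasis) fun v => ?_
  have := hall v
  simpa [OrthonormalBasis.coe_toBasis] using this
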